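/- Let ψ(z) = z - 1/z on ℂ \ {0}, let λ_n be as above and ρ_{n,N} = λ_n - λ_{n-N}. For N ≥ 1, 0 < c ≤ 1 and n > N, if |z - λ_n| < c ρ_{n,N} then z ≠ 0 and |ψ(z) - λ_{n-1}| < c ρ_{n-1,N}. -/

import Mathlib

noncomputable def lam : ℕ → ℝ
  | 0 => 0
  | n + 1 => (lam n + Real.sqrt (lam n ^ 2 + 4)) / 2

lemma lam_nonneg (n : ℕ) : 0 ≤ lam n := by
  induction n with
  | zero => simp [lam]
  | succ k ih =>
    have := Real.sqrt_nonneg (lam k ^ 2 + 4)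
    simp only [lam]
    linarith

lemma lam_pos_succ (n : ℕ) : 0 < lam (n + 1) := by
  have h1 : 0 < Real.sqrt (lam n ^ 2 + 4) := Real.sqrt_pos.mpr (by positivity)
  have h2 := lam_nonneg n
  simp only [lam]
  linarith

lemma lam_pos (n : ℕ) (h : 1 ≤ n) : 0 < lam n := by
  obtain ⟨k, rfl⟩ := Nat.exists_eq_add_of_le h
  rw [Nat.add_comm]
  exact lam_pos_succ k

lemma lam_sq (n : ℕ) : lam (n + 1) ^ 2 = lam (n + 1) * lam n + 1 := by
  have hs : Real.sqrt (lam n ^ 2 + 4) ^ 2 = lam n ^ 2 + 4 :=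
    Real.sq_sqrt (by positivity)
  simp only [lam]
  linear_combination (1/4 : ℝ) * hs

lemma lam_succ_sub (n : ℕ) : lam (n + 1) - lam n = 1 / lam (n + 1) := by
  have hp := lam_pos_succ n
  have hs := lam_sq n
  field_simp
  nlinarith [hs]

lemma lam_strictMono : StrictMono lam := by
  apply strictMono_nat_of_lt_succ
  intro n
  have h1 := lam_succ_sub n
  have h2 := lam_pos_succ n
  have : 0 < 1 / lam (n + 1) := by positivity
  linarith

lemma lam_sub_one (n : ℕ) (h : 1 ≤ n) : lam (n - 1) = lam n - 1 / lam n := by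
  cases n with
  | zero => omega
  | succ k =>
    simp only [Nat.add_sub_cancel]
    have := lam_succ_sub k
    linarith

theorem stmt_12 (N n : ℕ) (hN : 1 ≤ N) (hn : N < n) (c : ℝ) (hc0 : 0 < c) (hc1 : c ≤ 1)
    (z : ℂ) (hz : ‖z - lam n‖ < c * (lam n - lam (n - N))) :
    z ≠ 0 ∧
      ‖(z - 1 / z) - lam (n - 1)‖ < c * (lam (n - 1) - lam (n - 1 - N)) := by
  set a := lam n with ha
  set L := lam (n - N) with hL
  have hnN : 1 ≤ n - N := by omega
  have hLpos : 0 < L := lam_pos _ hnN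
  have hapos : 0 < a := lam_pos _ (by omega)
  have hLa : L < a := lam_strictMono (by omega : n - N < n)
  have hρ : 0 < a - L := by linarith
  have h1 : lam (n - 1) = a - 1 / a := lam_sub_one n (by omega)
  have h2' : lam (n - 1 - N) = L - 1 / L := by
    have hh : n - 1 - N = (n - N) - 1 := by omega
    rw [hh]
    exact lam_sub_one _ hnN
  have hcr : c * (a - L) ≤ a - L := by nlinarith
  -- lower bound on |z|
  have htri : ‖(a : ℂ)‖ ≤ ‖(a : ℂ) - z‖ + ‖z‖ := by
    simpa using norm_add_le ((a : ℂ) - z) z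
  have habsa : ‖(a : ℂ)‖ = a := by
    exact Complex.norm_of_nonneg hapos.le
  have hsub : ‖(a : ℂ) - z‖ = ‖z - a‖ := by
    exact norm_sub_rev _ _
  have hwz : L < ‖z‖ := by
    rw [habsa, hsub] at htri
    linarith [hz, hcr]
  have hzne : z ≠ 0 := by
    intro hz0
    rw [hz0] at hwz
    simp at hwz
    linarith
  refine ⟨hzne, ?_⟩
  have hane : (a : ℂ) ≠ 0 := by
    exact_mod_cast ne_of_gt hapos
  have key : (z - 1 / z) - (lam (n - 1) : ℂ) = (z - a) * (1 + 1 / (a * z)) := by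
    rw [h1]
    push_cast
    field_simp
    ring
  set r := ‖z - a‖ with hr
  set w := ‖z‖ with hw
  have hrnn : 0 ≤ r := norm_nonneg _
  have hfac : ‖1 + 1 / ((a : ℂ) * z)‖ ≤ 1 + 1 / (a * w) := by
    calc ‖1 + 1 / ((a : ℂ) * z)‖
        ≤ ‖1‖ + ‖1 / ((a : ℂ) * z)‖ := norm_add_le _ _
      _ = 1 + 1 / (a * w) := by
          rw [norm_one, norm_div, norm_one, norm_mul, habsa]
  have habs : ‖(z - 1 / z) - (lam (n - 1) : ℂ)‖ ≤ r * (1 + 1 / (a * w)) := by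
    rw [key, norm_mul]
    exact mul_le_mul_of_nonneg_left hfac hrnn
  have hinv : 1 / (a * w) < 1 / (a * L) := by
    apply one_div_lt_one_div_of_lt
    · positivity
    · nlinarith
  have hfinal : r * (1 + 1 / (a * w)) < c * (a - L) * (1 + 1 / (a * L)) := by
    have hy : 0 < 1 + 1 / (a * L) := by positivity
    nlinarith [mul_le_mul_of_nonneg_left (le_of_lt hinv) hrnn,
      mul_lt_mul_of_pos_right hz hy]
  have hrhs : c * (lam (n - 1) - lam (n - 1 - N)) = c * (a - L) * (1 + 1 / (a * L)) := by
    rw [h1, h2']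
    field_simp
    ring
  rw [hrhs]
  calc ‖(z - 1 / z) - (lam (n - 1) : ℂ)‖ ≤ r * (1 + 1 / (a * w)) := habs
    _ < c * (a - L) * (1 + 1 / (a * L)) := hfinal
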